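/- The satisfiability problem for the logic D is PSPACE-hard. -/
import Mathlib


namespace DLogic

/-- Integer terms of the logic D (rows are flattened into tuples of integers;
`col d i` is de Bruijn-style access to column `i` of the row bound by the
`d`-th enclosing selection). -/
inductive Term : Type
  | var : ℕ → Term
  | col : ℕ → ℕ → Term
  | const : ℤ → Term
  | add : Term → Term → Term
  | mul : ℤ → Term → Term

mutual
  /-- Table expressions of D. -/
  inductive Table : Type
    | input : List (List Term) → Table
    | sel : Formula → Table → Table
    | prod : Table → Table → Table
    | union : Table → Table → Table
  /-- Formulas of D. -/
  inductive Formula : Type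
    | le : Term → Term → Formula
    | nonempty : Table → Formula
    | not : Formula → Formula
    | or : Formula → Formula → Formula
end

def Term.eval (env : ℕ → ℤ) (stk : List (List ℤ)) : Term → ℤ
  | .var n => env n
  | .col d i => (stk.getD d []).getD i 0
  | .const k => k
  | .add a b => a.eval env stk + b.eval env stk
  | .mul k t => k * t.eval env stk

mutual
  /-- The finite set (list) of rows denoted by a table expression. -/
  def Table.eval (env : ℕ → ℤ) (stk : List (List ℤ)) : Table → List (List ℤ)
    | .input rows => rows.map (fun r => r.map (fun t => t.eval env stk))
    | .sel F D => (D.eval env stk).filter (fun r => F.eval env (r :: stk))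
    | .prod D₁ D₂ =>
        (D₁.eval env stk).flatMap (fun r₁ => (D₂.eval env stk).map (fun r₂ => r₁ ++ r₂))
    | .union D₁ D₂ => D₁.eval env stk ++ D₂.eval env stk
  /-- Truth value of a D formula. -/
  def Formula.eval (env : ℕ → ℤ) (stk : List (List ℤ)) : Formula → Bool
    | .le t₁ t₂ => decide (t₁.eval env stk ≤ t₂.eval env stk)
    | .nonempty D => !(D.eval env stk).isEmpty
    | .not F => !(F.eval env stk)
    | .or F₁ F₂ => F₁.eval env stk || F₂.eval env stk
end

/-- Satisfiability of a D formula. -/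
def Satisfiable (F : Formula) : Prop := ∃ env : ℕ → ℤ, F.eval env [] = true

end DLogic

namespace DLogic

def Term.size : Term → ℕ
  | .var _ => 1
  | .col _ _ => 1
  | .const _ => 1
  | .add a b => a.size + b.size + 1
  | .mul _ t => t.size + 1

mutual
  def Table.size : Table → ℕ
    | .input rows => 1 + (rows.map (fun r => 1 + (r.map Term.size).sum)).sum
    | .sel F D => 1 + F.size + D.size
    | .prod D₁ D₂ => 1 + D₁.size + D₂.size
    | .union D₁ D₂ => 1 + D₁.size + D₂.size
  def Formula.size : Formula → ℕ
    | .le t₁ t₂ => 1 + t₁.size + t₂.size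
    | .nonempty D => 1 + D.size
    | .not F => 1 + F.size
    | .or F₁ F₂ => 1 + F₁.size + F₂.size
end

/-- Derived equality `t₁ = t₂` in D: `t₁ ≤ t₂ ∧ t₂ ≤ t₁`. -/
def Formula.eq (t₁ t₂ : Term) : Formula :=
  .not (.or (.not (.le t₁ t₂)) (.not (.le t₂ t₁)))

/-- Quantified Boolean formulas (closed QBF, de Bruijn indices for
quantified Boolean variables). -/
inductive QBF : Type
  | var : ℕ → QBF
  | not : QBF → QBF
  | or : QBF → QBF → QBF
  | forall_ : QBF → QBF
  | exists_ : QBF → QBF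

def QBF.eval (stk : List Bool) : QBF → Bool
  | .var n => stk.getD n false
  | .not q => !(q.eval stk)
  | .or q₁ q₂ => q₁.eval stk || q₂.eval stk
  | .forall_ q => q.eval (false :: stk) && q.eval (true :: stk)
  | .exists_ q => q.eval (false :: stk) || q.eval (true :: stk)

def QBF.size : QBF → ℕ
  | .var _ => 1
  | .not q => 1 + q.size
  | .or q₁ q₂ => 1 + q₁.size + q₂.size
  | .forall_ q => 1 + q.size
  | .exists_ q => 1 + q.size

/-- The one-column table `B = {0, 1}`. -/
def boolTable : Table := .input [[.const 0], [.const 1]]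

/-- The encoding of QBF into D: `∃x.φ` becomes `∃̇ σx.(enc φ)({0,1})`,
`∀x.φ` becomes `¬∃̇ σx.(¬ enc φ)({0,1})`, and a Boolean variable becomes
the comparison of the corresponding (σ-bound) integer variable with 1. -/
def QBF.enc : QBF → Formula
  | .var n => Formula.eq (.col n 0) (.const 1)
  | .not q => .not q.enc
  | .or q₁ q₂ => .or q₁.enc q₂.enc
  | .forall_ q => .not (.nonempty (.sel (.not q.enc) boolTable))
  | .exists_ q => .nonempty (.sel q.enc boolTable)

end DLogic


namespace DLogic

def encStk (stk : List Bool) : List (List ℤ) :=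
  stk.map (fun b => [if b then (1:ℤ) else 0])

lemma col_eval (stk : List Bool) (n : ℕ) :
    ((encStk stk).getD n []).getD 0 0 = (if stk.getD n false then (1:ℤ) else 0) := by
  induction stk generalizing n with
  | nil => cases n <;> simp [encStk]
  | cons b t ih =>
    cases n with
    | zero => cases b <;> simp [encStk]
    | succ m => simpa [encStk] using ih m

lemma main_lemma (q : QBF) : ∀ (env : ℕ → ℤ) (stk : List Bool),
    q.enc.eval env (encStk stk) = q.eval stk := by
  induction q with
  | var n =>
    intro env stk
    simp only [QBF.enc, QBF.eval, Formula.eq, Formula.eval, Term.eval, col_eval]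
    cases stk.getD n false <;> simp
  | not q ih =>
    intro env stk
    simp [QBF.enc, QBF.eval, Formula.eval, ih]
  | or q₁ q₂ ih₁ ih₂ =>
    intro env stk
    simp [QBF.enc, QBF.eval, Formula.eval, ih₁, ih₂]
  | forall_ q ih =>
    intro env stk
    have h0 : ([(0:ℤ)] :: encStk stk) = encStk (false :: stk) := by simp [encStk]
    have h1 : ([(1:ℤ)] :: encStk stk) = encStk (true :: stk) := by simp [encStk]
    simp only [QBF.enc, QBF.eval, Formula.eval, Table.eval, boolTable, Term.eval,
      List.map, List.filter, h0, h1, ih]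
    cases q.eval (false :: stk) <;> cases q.eval (true :: stk) <;> simp
  | exists_ q ih =>
    intro env stk
    have h0 : ([(0:ℤ)] :: encStk stk) = encStk (false :: stk) := by simp [encStk]
    have h1 : ([(1:ℤ)] :: encStk stk) = encStk (true :: stk) := by simp [encStk]
    simp only [QBF.enc, QBF.eval, Formula.eval, Table.eval, boolTable, Term.eval,
      List.map, List.filter, h0, h1, ih]
    cases q.eval (false :: stk) <;> cases q.eval (true :: stk) <;> simp

lemma size_lemma (q : QBF) : q.enc.size ≤ 10 * q.size := by
  induction q with
  | var n => simp [QBF.enc, QBF.size, Formula.eq, Formula.size, Term.size]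
  | not q ih => simp only [QBF.enc, QBF.size, Formula.size]; omega
  | or q₁ q₂ ih₁ ih₂ => simp only [QBF.enc, QBF.size, Formula.size]; omega
  | forall_ q ih =>
    simp only [QBF.enc, QBF.size, Formula.size, Table.size, boolTable, Term.size,
      List.map, List.sum_cons, List.sum_nil]
    omega
  | exists_ q ih =>
    simp only [QBF.enc, QBF.size, Formula.size, Table.size, boolTable, Term.size,
      List.map, List.sum_cons, List.sum_nil]
    omega

end DLogic

/-- The satisfiability problem for D is PSPACE-hard:
the (PSPACE-complete) QBF problem reduces to D-satisfiability via the
polynomial-size encoding `QBF.enc`. -/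


theorem DLogic.satisfiability_PSPACE_hard :
    (∀ q : DLogic.QBF, (q.eval [] = true ↔ DLogic.Satisfiable q.enc)) ∧
    (∃ c k : ℕ, ∀ q : DLogic.QBF, q.enc.size ≤ c * (q.size + 1) ^ k) := by
  constructor
  · intro q
    constructor
    · intro h
      exact ⟨fun _ => 0, by simpa [encStk] using (main_lemma q (fun _ => 0) []).trans h⟩
    · rintro ⟨env, h⟩
      have := main_lemma q env []
      simp [encStk] at this
      rw [← this, h]
  · exact ⟨10, 1, fun q => by simpa using (size_lemma q).trans (by omega)⟩
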